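/- Let n ≥ 4 be even, 0 ≤ ℓ ≤ (n−2)/2 and π' = π \ {α_{n−1−2k}, α_n : 0 ≤ k ≤ ℓ} in type D_n. Then the ⟨ij⟩-orbits in π are {α_u, α_{n−1−2ℓ−u}} for 1 ≤ u ≤ (n−2−2ℓ)/2 and singletons {α_v} for n−1−2ℓ ≤ v ≤ n; in particular their number is (n + 2 + 2ℓ)/2. -/

import Mathlib

/-- The orbit of `a` under the map `f` (as the equivalence class of the
equivalence relation generated by `x ∼ f x`). -/
def orbit (f : ℕ → ℕ) (a : ℕ) : Set ℕ :=
  {b | Relation.EqvGen (fun x y => y = f x) a b}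

/-- The set of orbits of `f` on the (1-based) index set `{1, …, n}`. -/
def orbitsOn (f : ℕ → ℕ) (n : ℕ) : Set (Set ℕ) :=
  {C | ∃ a, 1 ≤ a ∧ a ≤ n ∧ C = orbit f a}

/-- The composite map `i ∘ j = i` on the indices of the simple roots of `D_n`
(`n` even, so `j = Id`) with `π' = π \ {α_{n-1-2k}, α_n : 0 ≤ k ≤ ℓ}` : on the
component `A_{n-2-2ℓ}` it exchanges `α_u` and `α_{n-1-2ℓ-u}`, and it is the
identity elsewhere. -/
def ijDev (n ℓ a : ℕ) : ℕ := if 1 ≤ a ∧ a ≤ n - 2 - 2 * ℓ then n - 1 - 2 * ℓ - a else a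

lemma orbit_of_involution (f : ℕ → ℕ) (hf : ∀ x, f (f x) = x) (a : ℕ) :
    orbit f a = {a, f a} := by
  ext b
  simp only [orbit, Set.mem_setOf_eq, Set.mem_insert_iff, Set.mem_singleton_iff]
  constructor
  · intro h
    have hr : Equivalence (fun x y : ℕ => y = x ∨ y = f x) := by
      constructor
      · intro x; left; rfl
      · rintro x y (rfl | rfl)
        · left; rfl
        · right; exact (hf x).symm
      · rintro x y z (rfl | rfl) h2
        · exact h2
        · rcases h2 with rfl | rfl
          · right; rfl
          · left; exact hf x
    have h' := Relation.EqvGen.mono (r := fun x y : ℕ => y = f x)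
      (p := fun x y : ℕ => y = x ∨ y = f x) (fun x y hxy => Or.inr hxy) _ _ h
    exact (hr.eqvGen_iff).mp h'
  · rintro (rfl | rfl)
    · exact Relation.EqvGen.refl _
    · exact Relation.EqvGen.rel _ _ rfl

lemma ijDev_invol (n ℓ x : ℕ) : ijDev n ℓ (ijDev n ℓ x) = x := by
  unfold ijDev
  split_ifs <;> omega

/-- For `D_n`, `n ≥ 4` even, `0 ≤ ℓ ≤ (n-2)/2`,
`π' = π \ {α_{n-1-2k}, α_n : 0 ≤ k ≤ ℓ}`, the `⟨ij⟩`-orbits in `π` are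
`{α_u, α_{n-1-2ℓ-u}}` for `1 ≤ u ≤ (n-2-2ℓ)/2` and the singletons `{α_v}` for
`n-1-2ℓ ≤ v ≤ n`; in particular their number is `(n+2+2ℓ)/2`. -/
theorem statement_16 (n ℓ : ℕ) (hn : 4 ≤ n) (hneven : Even n)
    (hl : 2 * ℓ ≤ n - 2) :
    orbitsOn (ijDev n ℓ) n
      = {C | ∃ u, 1 ≤ u ∧ u ≤ (n - 2 - 2 * ℓ) / 2 ∧
            C = ({u, n - 1 - 2 * ℓ - u} : Set ℕ)}
        ∪ {C | ∃ v, n - 1 - 2 * ℓ ≤ v ∧ v ≤ n ∧ C = ({v} : Set ℕ)} ∧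
    (orbitsOn (ijDev n ℓ) n).ncard = (n + 2 + 2 * ℓ) / 2 := by
  obtain ⟨k, hk⟩ := hneven
  have hset : orbitsOn (ijDev n ℓ) n
      = {C | ∃ u, 1 ≤ u ∧ u ≤ (n - 2 - 2 * ℓ) / 2 ∧
            C = ({u, n - 1 - 2 * ℓ - u} : Set ℕ)}
        ∪ {C | ∃ v, n - 1 - 2 * ℓ ≤ v ∧ v ≤ n ∧ C = ({v} : Set ℕ)} := by
    ext C
    simp only [orbitsOn, Set.mem_setOf_eq, Set.mem_union]
    constructor
    · rintro ⟨a, ha1, ha2, rfl⟩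
      rw [orbit_of_involution _ (ijDev_invol n ℓ) a]
      by_cases h : 1 ≤ a ∧ a ≤ n - 2 - 2 * ℓ
      · have hfa : ijDev n ℓ a = n - 1 - 2 * ℓ - a := by rw [ijDev, if_pos h]
        by_cases hu : a ≤ (n - 2 - 2 * ℓ) / 2
        · left; exact ⟨a, ha1, hu, by rw [hfa]⟩
        · left
          refine ⟨n - 1 - 2 * ℓ - a, by omega, by omega, ?_⟩
          have h2 : n - 1 - 2 * ℓ - (n - 1 - 2 * ℓ - a) = a := by omega
          rw [h2, hfa, Set.pair_comm]
      · have hfa : ijDev n ℓ a = a := by rw [ijDev, if_neg h]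
        right
        refine ⟨a, by omega, ha2, ?_⟩
        rw [hfa, Set.pair_eq_singleton]
    · rintro (⟨u, hu1, hu2, rfl⟩ | ⟨v, hv1, hv2, rfl⟩)
      · refine ⟨u, hu1, by omega, ?_⟩
        rw [orbit_of_involution _ (ijDev_invol n ℓ)]
        have hfu : ijDev n ℓ u = n - 1 - 2 * ℓ - u := by
          rw [ijDev, if_pos ⟨hu1, by omega⟩]
        rw [hfu]
      · refine ⟨v, by omega, hv2, ?_⟩
        rw [orbit_of_involution _ (ijDev_invol n ℓ)]
        have hfv : ijDev n ℓ v = v := by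
          rw [ijDev, if_neg (by omega)]
        rw [hfv, Set.pair_eq_singleton]
  refine ⟨hset, ?_⟩
  rw [hset]
  have hA : {C : Set ℕ | ∃ u, 1 ≤ u ∧ u ≤ (n - 2 - 2 * ℓ) / 2 ∧
        C = ({u, n - 1 - 2 * ℓ - u} : Set ℕ)}
      = (fun u => ({u, n - 1 - 2 * ℓ - u} : Set ℕ)) '' Set.Icc 1 ((n - 2 - 2 * ℓ) / 2) := by
    ext C
    simp only [Set.mem_setOf_eq, Set.mem_image, Set.mem_Icc]
    constructor
    · rintro ⟨u, h1, h2, rfl⟩; exact ⟨u, ⟨h1, h2⟩, rfl⟩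
    · rintro ⟨u, ⟨h1, h2⟩, rfl⟩; exact ⟨u, h1, h2, rfl⟩
  have hB : {C : Set ℕ | ∃ v, n - 1 - 2 * ℓ ≤ v ∧ v ≤ n ∧ C = ({v} : Set ℕ)}
      = (fun v => ({v} : Set ℕ)) '' Set.Icc (n - 1 - 2 * ℓ) n := by
    ext C
    simp only [Set.mem_setOf_eq, Set.mem_image, Set.mem_Icc]
    constructor
    · rintro ⟨v, h1, h2, rfl⟩; exact ⟨v, ⟨h1, h2⟩, rfl⟩
    · rintro ⟨v, ⟨h1, h2⟩, rfl⟩; exact ⟨v, h1, h2, rfl⟩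
  rw [hA, hB]
  have hAinj : Set.InjOn (fun u => ({u, n - 1 - 2 * ℓ - u} : Set ℕ))
      (Set.Icc 1 ((n - 2 - 2 * ℓ) / 2)) := by
    intro u hu u' hu' h
    simp only [Set.mem_Icc] at hu hu'
    have h' : ({u, n - 1 - 2 * ℓ - u} : Set ℕ) = {u', n - 1 - 2 * ℓ - u'} := h
    have hmem : u ∈ ({u', n - 1 - 2 * ℓ - u'} : Set ℕ) := by
      rw [← h']; exact Set.mem_insert _ _
    simp only [Set.mem_insert_iff, Set.mem_singleton_iff] at hmem
    omega
  have hBinj : Set.InjOn (fun v => ({v} : Set ℕ)) (Set.Icc (n - 1 - 2 * ℓ) n) := by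
    intro v _ v' _ h
    simpa using h
  have hdisj : Disjoint
      ((fun u => ({u, n - 1 - 2 * ℓ - u} : Set ℕ)) '' Set.Icc 1 ((n - 2 - 2 * ℓ) / 2))
      ((fun v => ({v} : Set ℕ)) '' Set.Icc (n - 1 - 2 * ℓ) n) := by
    rw [Set.disjoint_left]
    rintro C ⟨u, hu, rfl⟩ ⟨v, hv, h⟩
    simp only [Set.mem_Icc] at hu hv
    have h' : ({v} : Set ℕ) = ({u, n - 1 - 2 * ℓ - u} : Set ℕ) := h
    have h1 : u ∈ ({v} : Set ℕ) := by rw [h']; exact Set.mem_insert _ _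
    have h2 : n - 1 - 2 * ℓ - u ∈ ({v} : Set ℕ) := by
      rw [h']; exact Set.mem_insert_iff.mpr (Or.inr rfl)
    simp only [Set.mem_singleton_iff] at h1 h2
    omega
  rw [Set.ncard_union_eq hdisj ((Set.finite_Icc _ _).image _) ((Set.finite_Icc _ _).image _),
    Set.ncard_image_of_injOn hAinj, Set.ncard_image_of_injOn hBinj,
    ← Finset.coe_Icc, ← Finset.coe_Icc, Set.ncard_coe_finset, Set.ncard_coe_finset,
    Nat.card_Icc, Nat.card_Icc]
  omega
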